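/- arXiv:2407.04278 — 2 statements merged into one kernel-verified Lean document; each statement's English description precedes it below -/
import Mathlib

section
/- Let t : X → B(H) and s : X → B(K) be Toeplitz-type representation maps of a Hilbert C*-module X over a C*-algebra A relative to *-homomorphisms ρ_H : A → B(H) and ρ_K : A → B(K) respectively. Let V : H → K be a bounded linear isometry (V*V = 1_H) which is A-linear in the sense that V ρ_H(a) = ρ_K(a) V for all a ∈ A, and suppose V* s(ξ) V = t(ξ) for all ξ ∈ X. Then s(ξ) V = V t(ξ) for all ξ ∈ X. -/
/-- If `t : X → B(H)` and `s : X → B(K)` are Toeplitz-type representation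
maps of a Hilbert C*-module `X` over a C*-algebra `A`, relative to *-homomorphisms
`ρ_H : A → B(H)` and `ρ_K : A → B(K)`, and `V : H → K` is an `A`-linear bounded isometry
with `V* s(ξ) V = t(ξ)` for all `ξ`, then `s(ξ) V = V t(ξ)` for all `ξ ∈ X`. -/
theorem stmt2
    {A : Type*} [NormedRing A] [StarRing A] [CStarRing A] [NormedAlgebra ℂ A]
    [StarModule ℂ A]
    {H K : Type*} [NormedAddCommGroup H] [InnerProductSpace ℂ H] [CompleteSpace H]
    [NormedAddCommGroup K] [InnerProductSpace ℂ K] [CompleteSpace K]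
    {X : Type*} [NormedAddCommGroup X] [Module ℂ X]
    (inner : X → X → A)
    (hsymm : ∀ ξ η : X, star (inner ξ η) = inner η ξ)
    (hnorm : ∀ ξ : X, ‖inner ξ ξ‖ = ‖ξ‖ ^ 2)
    (ρH : A →⋆ₙₐ[ℂ] (H →L[ℂ] H)) (ρK : A →⋆ₙₐ[ℂ] (K →L[ℂ] K))
    (t : X →ₗ[ℂ] (H →L[ℂ] H)) (s : X →ₗ[ℂ] (K →L[ℂ] K))
    (ht : ∀ ξ η : X, (ContinuousLinearMap.adjoint (t ξ)) ∘L (t η) = ρH (inner ξ η))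
    (hs : ∀ ξ η : X, (ContinuousLinearMap.adjoint (s ξ)) ∘L (s η) = ρK (inner ξ η))
    (V : H →L[ℂ] K)
    (hV : (ContinuousLinearMap.adjoint V) ∘L V = 1)
    (hlin : ∀ a : A, V ∘L ρH a = ρK a ∘L V)
    (hdil : ∀ ξ : X, (ContinuousLinearMap.adjoint V) ∘L (s ξ) ∘L V = t ξ) :
    ∀ ξ : X, (s ξ) ∘L V = V ∘L (t ξ) := by
  intro ξ
  open ContinuousLinearMap in
  have key : (adjoint ((s ξ) ∘L V - V ∘L (t ξ))) ∘L ((s ξ) ∘L V - V ∘L (t ξ)) = 0 := by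
    have hdil' : (adjoint V) ∘L ((adjoint (s ξ)) ∘L V) = adjoint (t ξ) := by
      have := congrArg ContinuousLinearMap.adjoint (hdil ξ)
      simpa [ContinuousLinearMap.adjoint_comp, ContinuousLinearMap.comp_assoc] using this
    have h1 : (adjoint V) ∘L ((adjoint (s ξ)) ∘L ((s ξ) ∘L V)) = (adjoint (t ξ)) ∘L (t ξ) := by
      calc (adjoint V) ∘L ((adjoint (s ξ)) ∘L ((s ξ) ∘L V))
          = (adjoint V) ∘L (((adjoint (s ξ)) ∘L (s ξ)) ∘L V) := by
            rw [ContinuousLinearMap.comp_assoc]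
        _ = (adjoint V) ∘L ((ρK (inner ξ ξ)) ∘L V) := by rw [hs]
        _ = (adjoint V) ∘L (V ∘L (ρH (inner ξ ξ))) := by rw [← hlin]
        _ = ((adjoint V) ∘L V) ∘L (ρH (inner ξ ξ)) := by
            rw [ContinuousLinearMap.comp_assoc]
        _ = ρH (inner ξ ξ) := by rw [hV, ContinuousLinearMap.one_def,
              ContinuousLinearMap.id_comp]
        _ = (adjoint (t ξ)) ∘L (t ξ) := (ht ξ ξ).symm
    have h2 : (adjoint V) ∘L ((adjoint (s ξ)) ∘L (V ∘L (t ξ))) = (adjoint (t ξ)) ∘L (t ξ) := by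
      rw [← ContinuousLinearMap.comp_assoc, ← ContinuousLinearMap.comp_assoc,
        ContinuousLinearMap.comp_assoc (adjoint V), hdil']
    have h3 : (adjoint (t ξ)) ∘L ((adjoint V) ∘L ((s ξ) ∘L V)) = (adjoint (t ξ)) ∘L (t ξ) := by
      rw [hdil ξ]
    have h4 : (adjoint (t ξ)) ∘L ((adjoint V) ∘L (V ∘L (t ξ))) = (adjoint (t ξ)) ∘L (t ξ) := by
      rw [← ContinuousLinearMap.comp_assoc (adjoint V), hV, ContinuousLinearMap.one_def,
        ContinuousLinearMap.id_comp]
    simp only [ContinuousLinearMap.adjoint_comp, map_sub, ContinuousLinearMap.sub_comp,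
      ContinuousLinearMap.comp_sub, ContinuousLinearMap.comp_assoc]
    rw [h1, h2, h3, h4]
    abel
  have hz : ‖(s ξ) ∘L V - V ∘L (t ξ)‖ = 0 := by
    have := ContinuousLinearMap.norm_adjoint_comp_self ((s ξ) ∘L V - V ∘L (t ξ))
    rw [key, norm_zero] at this
    nlinarith [norm_nonneg ((s ξ) ∘L V - V ∘L (t ξ))]
  exact sub_eq_zero.mp (norm_eq_zero.mp hz)
end

section
/- Let t : X → B(H) and s : X → B(K) be Toeplitz-type representation maps of a Hilbert C*-module X over a C*-algebra A relative to *-homomorphisms ρ_H : A → B(H) and ρ_K : A → B(K), let V : H → K be a bounded linear isometry with V ρ_H(a) = ρ_K(a) V for all a ∈ A and V* s(ξ) V = t(ξ) for all ξ ∈ X. Then for every n ≥ 1 and all ξ₁, ξ₂, …, ξₙ ∈ X one has V* s(ξ₁) s(ξ₂) ⋯ s(ξₙ) V = t(ξ₁) t(ξ₂) ⋯ t(ξₙ); that is, compression by V is multiplicative on products of the operators s(ξᵢ). -/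
set_option maxHeartbeats 1000000

open ContinuousLinearMap in
lemma aux_zero_of_adjoint_comp {H K : Type*} [NormedAddCommGroup H] [InnerProductSpace ℂ H]
    [CompleteSpace H] [NormedAddCommGroup K] [InnerProductSpace ℂ K] [CompleteSpace K]
    (D : H →L[ℂ] K) (h : (adjoint D) ∘L D = 0) : D = 0 := by
  ext x
  have : (inner ℂ (D x) (D x) : ℂ) = 0 := by
    rw [← ContinuousLinearMap.adjoint_inner_right]
    have : (adjoint D) (D x) = 0 := by
      have := congrArg (fun T => T x) h
      simpa using this
    simp [this]
  simpa using inner_self_eq_zero.mp this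

/-- With `(K, s, V)` an isometric dilation of a Toeplitz-type representation
`(H, t)` of a Hilbert C*-module `X` over a C*-algebra `A`, compression by `V` is
multiplicative on products: `V* s(ξ₁) ⋯ s(ξₙ) V = t(ξ₁) ⋯ t(ξₙ)` for all `n ≥ 1` and
`ξ₁, …, ξₙ ∈ X`. -/
theorem stmt3
    {A : Type*} [NormedRing A] [StarRing A] [CStarRing A] [NormedAlgebra ℂ A]
    [StarModule ℂ A]
    {H K : Type*} [NormedAddCommGroup H] [InnerProductSpace ℂ H] [CompleteSpace H]
    [NormedAddCommGroup K] [InnerProductSpace ℂ K] [CompleteSpace K]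
    {X : Type*} [NormedAddCommGroup X] [Module ℂ X]
    (inner : X → X → A)
    (hsymm : ∀ ξ η : X, star (inner ξ η) = inner η ξ)
    (hnorm : ∀ ξ : X, ‖inner ξ ξ‖ = ‖ξ‖ ^ 2)
    (ρH : A →⋆ₙₐ[ℂ] (H →L[ℂ] H)) (ρK : A →⋆ₙₐ[ℂ] (K →L[ℂ] K))
    (t : X →ₗ[ℂ] (H →L[ℂ] H)) (s : X →ₗ[ℂ] (K →L[ℂ] K))
    (ht : ∀ ξ η : X, (ContinuousLinearMap.adjoint (t ξ)) ∘L (t η) = ρH (inner ξ η))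
    (hs : ∀ ξ η : X, (ContinuousLinearMap.adjoint (s ξ)) ∘L (s η) = ρK (inner ξ η))
    (V : H →L[ℂ] K)
    (hV : (ContinuousLinearMap.adjoint V) ∘L V = 1)
    (hlin : ∀ a : A, V ∘L ρH a = ρK a ∘L V)
    (hdil : ∀ ξ : X, (ContinuousLinearMap.adjoint V) ∘L (s ξ) ∘L V = t ξ) :
    ∀ (n : ℕ), 1 ≤ n → ∀ ξ : Fin n → X,
      (ContinuousLinearMap.adjoint V) ∘L (List.ofFn fun i => s (ξ i)).prod ∘L V
        = (List.ofFn fun i => t (ξ i)).prod := by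
  classical
  -- compression of ρK is ρH
  have hρ : ∀ a : A, (ContinuousLinearMap.adjoint V) ∘L (ρK a ∘L V) = ρH a := by
    intro a
    rw [← hlin, ← ContinuousLinearMap.comp_assoc, hV, ContinuousLinearMap.one_def,
      ContinuousLinearMap.id_comp]
  -- adjoint version of the dilation condition
  have hdil' : ∀ ξ : X, (ContinuousLinearMap.adjoint V) ∘L
      ((ContinuousLinearMap.adjoint (s ξ)) ∘L V) = ContinuousLinearMap.adjoint (t ξ) := by
    intro ξ
    have := congrArg ContinuousLinearMap.adjoint (hdil ξ)
    rw [ContinuousLinearMap.adjoint_comp, ContinuousLinearMap.adjoint_comp,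
      ContinuousLinearMap.adjoint_adjoint] at this
    rw [← ContinuousLinearMap.comp_assoc]
    exact this
  -- key intertwining: s ξ ∘ V = V ∘ t ξ
  have key : ∀ ξ : X, (s ξ) ∘L V = V ∘L (t ξ) := by
    intro ξ
    have hz : (ContinuousLinearMap.adjoint ((s ξ) ∘L V - V ∘L (t ξ))) ∘L
        ((s ξ) ∘L V - V ∘L (t ξ)) = 0 := by
      rw [map_sub, ContinuousLinearMap.adjoint_comp, ContinuousLinearMap.adjoint_comp,
        ContinuousLinearMap.sub_comp, ContinuousLinearMap.comp_sub,
        ContinuousLinearMap.comp_sub]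
      have e1 : (ContinuousLinearMap.adjoint V ∘L ContinuousLinearMap.adjoint (s ξ)) ∘L
          ((s ξ) ∘L V) = ContinuousLinearMap.adjoint (t ξ) ∘L t ξ := by
        calc (ContinuousLinearMap.adjoint V ∘L ContinuousLinearMap.adjoint (s ξ)) ∘L
              ((s ξ) ∘L V)
            = ContinuousLinearMap.adjoint V ∘L
              ((ContinuousLinearMap.adjoint (s ξ) ∘L (s ξ)) ∘L V) := by
              simp [ContinuousLinearMap.comp_assoc]
          _ = ContinuousLinearMap.adjoint V ∘L (ρK (inner ξ ξ) ∘L V) := by rw [hs]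
          _ = ρH (inner ξ ξ) := hρ _
          _ = ContinuousLinearMap.adjoint (t ξ) ∘L t ξ := (ht ξ ξ).symm
      have e2 : (ContinuousLinearMap.adjoint V ∘L ContinuousLinearMap.adjoint (s ξ)) ∘L
          (V ∘L (t ξ)) = ContinuousLinearMap.adjoint (t ξ) ∘L t ξ := by
        calc (ContinuousLinearMap.adjoint V ∘L ContinuousLinearMap.adjoint (s ξ)) ∘L
              (V ∘L (t ξ))
            = (ContinuousLinearMap.adjoint V ∘L
                (ContinuousLinearMap.adjoint (s ξ) ∘L V)) ∘L t ξ := by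
              simp [ContinuousLinearMap.comp_assoc]
          _ = ContinuousLinearMap.adjoint (t ξ) ∘L t ξ := by rw [hdil' ξ]
      have e3 : (ContinuousLinearMap.adjoint (t ξ) ∘L ContinuousLinearMap.adjoint V) ∘L
          ((s ξ) ∘L V) = ContinuousLinearMap.adjoint (t ξ) ∘L t ξ := by
        calc (ContinuousLinearMap.adjoint (t ξ) ∘L ContinuousLinearMap.adjoint V) ∘L
              ((s ξ) ∘L V)
            = ContinuousLinearMap.adjoint (t ξ) ∘L
              (ContinuousLinearMap.adjoint V ∘L ((s ξ) ∘L V)) := by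
              simp [ContinuousLinearMap.comp_assoc]
          _ = ContinuousLinearMap.adjoint (t ξ) ∘L t ξ := by
              rw [hdil ξ]
      have e4 : (ContinuousLinearMap.adjoint (t ξ) ∘L ContinuousLinearMap.adjoint V) ∘L
          (V ∘L (t ξ)) = ContinuousLinearMap.adjoint (t ξ) ∘L t ξ := by
        calc (ContinuousLinearMap.adjoint (t ξ) ∘L ContinuousLinearMap.adjoint V) ∘L
              (V ∘L (t ξ))
            = ContinuousLinearMap.adjoint (t ξ) ∘L
              ((ContinuousLinearMap.adjoint V ∘L V) ∘L t ξ) := by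
              simp [ContinuousLinearMap.comp_assoc]
          _ = ContinuousLinearMap.adjoint (t ξ) ∘L t ξ := by
              rw [hV, ContinuousLinearMap.one_def, ContinuousLinearMap.id_comp]
      rw [e1, e2, e3, e4]
      abel
    have := aux_zero_of_adjoint_comp _ hz
    exact sub_eq_zero.mp this
  -- product intertwining by induction on lists
  have prodkey : ∀ l : List X, (l.map s).prod ∘L V = V ∘L (l.map t).prod := by
    intro l
    induction l with
    | nil => simp [ContinuousLinearMap.one_def]
    | cons a l ih =>
      simp only [List.map_cons, List.prod_cons, ContinuousLinearMap.mul_def]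
      rw [ContinuousLinearMap.comp_assoc, ih, ← ContinuousLinearMap.comp_assoc, key a,
        ContinuousLinearMap.comp_assoc]
  intro n _ ξ
  have h1 : (List.ofFn fun i => s (ξ i)) = (List.ofFn ξ).map s := by
    rw [List.map_ofFn]; rfl
  have h2 : (List.ofFn fun i => t (ξ i)) = (List.ofFn ξ).map t := by
    rw [List.map_ofFn]; rfl
  rw [h1, h2, prodkey, ← ContinuousLinearMap.comp_assoc, hV, ContinuousLinearMap.one_def,
    ContinuousLinearMap.id_comp]
end
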